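/- arXiv:2101.03461 — 2 statements merged into one kernel-verified Lean document; each statement's English description precedes it below -/
import Mathlib

section
/- Let R be a supercommutative superalgebra. Then I_R/I_R² is canonically isomorphic to R₁/R₁³ as an R̄-module, where I_R = (R₁) and R̄ = R/I_R; in particular I_R/I_R² is a purely odd R̄-supermodule. -/
/-!
STATEMENT 2: For a supercommutative superalgebra `R`, the conormal module `I_R/I_R²`
(`I_R = (R₁)` the ideal generated by odd elements) is canonically isomorphic to
`R₁/R₁³`, where `R₁³` is spanned by products of three odd elements; the isomorphism
is induced by the inclusion `R₁ ⊆ I_R` and is linear over the even part `R₀`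
(hence over `R̄ = R/I_R`).
-/

variable {k R : Type} [Field k] [Ring R] [Algebra k R]

/-- The two-sided ideal generated by the odd part, as a `k`-submodule. -/
def oddIdeal (𝒜 : ZMod 2 → Submodule k R) : Submodule k R :=
  Submodule.span k {x | ∃ r ∈ 𝒜 1, ∃ a b : R, x = a * r * b}

/-- The square of the ideal `I_R`, as a `k`-submodule. -/
def oddIdealSq (𝒜 : ZMod 2 → Submodule k R) : Submodule k R :=
  Submodule.span k {x | ∃ y ∈ oddIdeal 𝒜, ∃ z ∈ oddIdeal 𝒜, x = y * z}

/-- `R₁³`: the span of products of three odd elements. -/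
def oddCube (𝒜 : ZMod 2 → Submodule k R) : Submodule k R :=
  Submodule.span k {x | ∃ a ∈ 𝒜 1, ∃ b ∈ 𝒜 1, ∃ c ∈ 𝒜 1, x = a * b * c}

set_option linter.unusedSectionVars false

section Aux

/-- span of `r * c` with `r` odd -/
def oddIdeal' (𝒜 : ZMod 2 → Submodule k R) : Submodule k R :=
  Submodule.span k {x | ∃ r ∈ 𝒜 1, ∃ c : R, x = r * c}

/-- span of `a * b * c` with `a, b` odd -/
def spanPairs (𝒜 : ZMod 2 → Submodule k R) : Submodule k R :=
  Submodule.span k {x | ∃ a ∈ 𝒜 1, ∃ b ∈ 𝒜 1, ∃ c : R, x = a * b * c}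

lemma zsmul_mem' {p : Submodule k R} {x : R} (n : ℤ) (h : x ∈ p) : n • x ∈ p :=
  p.toAddSubgroup.zsmul_mem h n

lemma mem_graded' (𝒜 : ZMod 2 → Submodule k R) [GradedAlgebra 𝒜] {i j l : ZMod 2} {a b : R}
    (h : i + j = l) (ha : a ∈ 𝒜 i) (hb : b ∈ 𝒜 j) : a * b ∈ 𝒜 l :=
  h ▸ SetLike.mul_mem_graded ha hb

variable (𝒜 : ZMod 2 → Submodule k R) [GradedAlgebra 𝒜]

/-- projection onto the odd component -/
noncomputable def proj1 : R →ₗ[k] 𝒜 1 :=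
  (DirectSum.component k (ZMod 2) (fun i => 𝒜 i) 1).comp
    (DirectSum.decomposeAlgEquiv 𝒜).toLinearMap

lemma proj1_apply (x : R) : proj1 𝒜 x = DirectSum.decompose 𝒜 x 1 := rfl

lemma decompose_two (x : R) :
    x = (DirectSum.decompose 𝒜 x 0 : R) + (DirectSum.decompose 𝒜 x 1 : R) := by
  classical
  conv_lhs => rw [← DirectSum.sum_support_decompose 𝒜 x]
  rw [Finset.sum_subset (Finset.subset_univ _)]
  · have huniv : (Finset.univ : Finset (ZMod 2)) = {0, 1} := by decide
    rw [huniv, Finset.sum_insert (by decide), Finset.sum_singleton]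
  · intro i _ hi; simpa using hi

lemma exists_decomp (x : R) : ∃ x0 ∈ 𝒜 0, ∃ x1 ∈ 𝒜 1, x = x0 + x1 :=
  ⟨_, SetLike.coe_mem _, _, SetLike.coe_mem _, decompose_two 𝒜 x⟩

lemma odd_le_ideal : 𝒜 1 ≤ oddIdeal 𝒜 := fun r hr =>
  Submodule.subset_span ⟨r, hr, 1, 1, by simp⟩

lemma cube_le_pairs : oddCube 𝒜 ≤ spanPairs 𝒜 := by
  apply Submodule.span_mono
  rintro _ ⟨a, ha, b, hb, c, _, rfl⟩
  exact ⟨a, ha, b, hb, c, rfl⟩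

lemma pairs_le_sq : spanPairs 𝒜 ≤ oddIdealSq 𝒜 := by
  rw [spanPairs, Submodule.span_le]
  rintro _ ⟨a, ha, b, hb, c, rfl⟩
  exact Submodule.subset_span ⟨a, odd_le_ideal 𝒜 ha,
    b * c, Submodule.subset_span ⟨b, hb, 1, c, by rw [one_mul]⟩, by rw [mul_assoc]⟩

lemma cube_le_sq : oddCube 𝒜 ≤ oddIdealSq 𝒜 := (cube_le_pairs 𝒜).trans (pairs_le_sq 𝒜)

variable (hsc : ∀ (i j : ZMod 2) (a b : R), a ∈ 𝒜 i → b ∈ 𝒜 j →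
      b * a = ((-1 : ℤ) ^ (i.val * j.val)) • (a * b))
include hsc

lemma ideal_le_ideal' : oddIdeal 𝒜 ≤ oddIdeal' 𝒜 := by
  rw [oddIdeal, Submodule.span_le]
  rintro _ ⟨r, hr, a, b, rfl⟩
  obtain ⟨a0, ha0, a1, ha1, rfl⟩ := exists_decomp 𝒜 a
  have gen : ∀ (i : ZMod 2) (ai : R), ai ∈ 𝒜 i → ai * r * b ∈ oddIdeal' 𝒜 := by
    intro i ai hai
    have h := hsc 1 i r ai hr hai
    have e : ai * r * b = ((-1 : ℤ) ^ ((1 : ZMod 2).val * i.val)) • (r * (ai * b)) := by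
      rw [h, smul_mul_assoc, mul_assoc]
    rw [e]
    exact zsmul_mem' _ (Submodule.subset_span ⟨r, hr, ai * b, rfl⟩)
  rw [add_mul, add_mul]
  exact Submodule.add_mem _ (gen 0 a0 ha0) (gen 1 a1 ha1)

lemma ideal_le_sup : oddIdeal 𝒜 ≤ 𝒜 1 ⊔ spanPairs 𝒜 := by
  refine (ideal_le_ideal' 𝒜 hsc).trans ?_
  rw [oddIdeal', Submodule.span_le]
  rintro _ ⟨r, hr, c, rfl⟩
  obtain ⟨c0, hc0, c1, hc1, rfl⟩ := exists_decomp 𝒜 c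
  rw [mul_add]
  refine Submodule.add_mem _ ?_ ?_
  · exact Submodule.mem_sup_left (mem_graded' 𝒜 (by decide) hr hc0)
  · exact Submodule.mem_sup_right (Submodule.subset_span ⟨r, hr, c1, hc1, 1, (mul_one _).symm⟩)

lemma pair_helper {r r' : R} (hr : r ∈ 𝒜 1) (hr' : r' ∈ 𝒜 1) {i : ZMod 2} {ci : R}
    (hci : ci ∈ 𝒜 i) (c' : R) : r * ci * (r' * c') ∈ spanPairs 𝒜 := by
  have h := hsc 1 i r' ci hr' hci
  have e : r * ci * (r' * c') = ((-1 : ℤ) ^ ((1 : ZMod 2).val * i.val)) • (r * r' * (ci * c')) := by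
    calc r * ci * (r' * c') = r * (ci * r') * c' := by simp only [mul_assoc]
    _ = r * (((-1 : ℤ) ^ ((1 : ZMod 2).val * i.val)) • (r' * ci)) * c' := by rw [h]
    _ = ((-1 : ℤ) ^ ((1 : ZMod 2).val * i.val)) • (r * r' * (ci * c')) := by
        simp only [mul_smul_comm, smul_mul_assoc, mul_assoc]
  rw [e]
  exact zsmul_mem' _ (Submodule.subset_span ⟨r, hr, r', hr', ci * c', rfl⟩)

lemma sq_le_pairs : oddIdealSq 𝒜 ≤ spanPairs 𝒜 := by
  rw [oddIdealSq, Submodule.span_le]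
  rintro _ ⟨y, hy, z, hz, rfl⟩
  replace hy := ideal_le_ideal' 𝒜 hsc hy
  replace hz := ideal_le_ideal' 𝒜 hsc hz
  induction hy using Submodule.span_induction with
  | mem y hy =>
    obtain ⟨r, hr, c, rfl⟩ := hy
    induction hz using Submodule.span_induction with
    | mem z hz =>
      obtain ⟨r', hr', c', rfl⟩ := hz
      obtain ⟨c0, hc0, c1, hc1, rfl⟩ := exists_decomp 𝒜 c
      rw [mul_add, add_mul]
      exact Submodule.add_mem _ (pair_helper 𝒜 hsc hr hr' hc0 c')
        (pair_helper 𝒜 hsc hr hr' hc1 c')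
    | zero => rw [mul_zero]; exact Submodule.zero_mem _
    | add z w _ _ pz pw => rw [mul_add]; exact Submodule.add_mem _ pz pw
    | smul a z _ pz => rw [mul_smul_comm]; exact Submodule.smul_mem _ a pz
  | zero => rw [zero_mul]; exact Submodule.zero_mem _
  | add y w _ _ py pw => rw [add_mul]; exact Submodule.add_mem _ py pw
  | smul a y _ py => rw [smul_mul_assoc]; exact Submodule.smul_mem _ a py

end Aux

section Aux2
variable (𝒜 : ZMod 2 → Submodule k R) [GradedAlgebra 𝒜]

lemma proj1_pairs {x : R} (hx : x ∈ spanPairs 𝒜) : (proj1 𝒜 x : R) ∈ oddCube 𝒜 := by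
  induction hx using Submodule.span_induction with
  | mem x hx =>
    obtain ⟨a, ha, b, hb, c, rfl⟩ := hx
    obtain ⟨c0, hc0, c1, hc1, rfl⟩ := exists_decomp 𝒜 c
    have h0 : a * b * c0 ∈ 𝒜 0 := mem_graded' 𝒜 (by decide) (mem_graded' 𝒜 rfl ha hb) hc0
    have h1 : a * b * c1 ∈ 𝒜 1 := mem_graded' 𝒜 (by decide) (mem_graded' 𝒜 rfl ha hb) hc1
    rw [mul_add, map_add, Submodule.coe_add, proj1_apply, proj1_apply,
      DirectSum.decompose_of_mem_ne 𝒜 h0 (by decide : (0 : ZMod 2) ≠ 1),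
      DirectSum.decompose_of_mem_same 𝒜 h1, zero_add]
    exact Submodule.subset_span ⟨a, ha, b, hb, c1, hc1, rfl⟩
  | zero => rw [map_zero]; exact Submodule.zero_mem _
  | add x y _ _ px py => rw [map_add, Submodule.coe_add]; exact Submodule.add_mem _ px py
  | smul a x _ px =>
    rw [map_smul, Submodule.coe_smul]; exact Submodule.smul_mem _ a px

lemma proj1_even_mul {b : R} (hb : b ∈ 𝒜 0) (x : R) :
    (proj1 𝒜 (b * x) : R) = b * (proj1 𝒜 x : R) := by
  obtain ⟨x0, hx0, x1, hx1, rfl⟩ := exists_decomp 𝒜 x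
  have hbx0 : b * x0 ∈ 𝒜 0 := mem_graded' 𝒜 (by decide) hb hx0
  have hbx1 : b * x1 ∈ 𝒜 1 := mem_graded' 𝒜 (by decide) hb hx1
  rw [mul_add, map_add, map_add, Submodule.coe_add, Submodule.coe_add,
    proj1_apply, proj1_apply, proj1_apply, proj1_apply,
    DirectSum.decompose_of_mem_ne 𝒜 hbx0 (by decide : (0 : ZMod 2) ≠ 1),
    DirectSum.decompose_of_mem_same 𝒜 hbx1,
    DirectSum.decompose_of_mem_ne 𝒜 hx0 (by decide : (0 : ZMod 2) ≠ 1),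
    DirectSum.decompose_of_mem_same 𝒜 hx1, zero_add, zero_add]

lemma even_mul_cube {b : R} (hb : b ∈ 𝒜 0) {x : R} (hx : x ∈ oddCube 𝒜) :
    b * x ∈ oddCube 𝒜 := by
  induction hx using Submodule.span_induction with
  | mem x hx =>
    obtain ⟨a, ha, a', ha', c, hc, rfl⟩ := hx
    have e : b * (a * a' * c) = (b * a) * a' * c := by simp only [mul_assoc]
    rw [e]
    exact Submodule.subset_span ⟨b * a, mem_graded' 𝒜 (by decide) hb ha, a', ha', c, hc, rfl⟩
  | zero => rw [mul_zero]; exact Submodule.zero_mem _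
  | add x y _ _ px py => rw [mul_add]; exact Submodule.add_mem _ px py
  | smul a x _ px => rw [mul_smul_comm]; exact Submodule.smul_mem _ a px

end Aux2

lemma proj1_sub_self_mem (𝒜 : ZMod 2 → Submodule k R) [GradedAlgebra 𝒜]
    (hsc : ∀ (i j : ZMod 2) (a b : R), a ∈ 𝒜 i → b ∈ 𝒜 j →
      b * a = ((-1 : ℤ) ^ (i.val * j.val)) • (a * b))
    {x : R} (hx : x ∈ oddIdeal 𝒜) : (proj1 𝒜 x : R) - x ∈ oddIdealSq 𝒜 := by
  obtain ⟨s, hs, t, ht, hst⟩ := Submodule.mem_sup.mp (ideal_le_sup 𝒜 hsc hx)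
  rw [← hst, map_add, Submodule.coe_add,
    show (proj1 𝒜 s : R) = s by rw [proj1_apply, DirectSum.decompose_of_mem_same 𝒜 hs],
    show s + (proj1 𝒜 t : R) - (s + t) = (proj1 𝒜 t : R) - t by abel]
  exact Submodule.sub_mem _ (cube_le_sq 𝒜 (proj1_pairs 𝒜 ht)) (pairs_le_sq 𝒜 ht)


theorem conormal_module_eq_odd_mod_oddCube
    (k : Type) [Field k] (h2 : (2 : k) ≠ 0)
    (R : Type) [Ring R] [Algebra k R]
    (𝒜 : ZMod 2 → Submodule k R) [GradedAlgebra 𝒜]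
    (hsc : ∀ (i j : ZMod 2) (a b : R), a ∈ 𝒜 i → b ∈ 𝒜 j →
      b * a = ((-1 : ℤ) ^ (i.val * j.val)) • (a * b)) :
    ∃ e : (↥(oddIdeal 𝒜) ⧸ (oddIdealSq 𝒜).comap (oddIdeal 𝒜).subtype) ≃ₗ[k]
          (↥(𝒜 1) ⧸ (oddCube 𝒜).comap (𝒜 1).subtype),
      -- `e` is induced by the inclusion `R₁ ⊆ I_R`...
      (∀ (r : R) (h1 : r ∈ 𝒜 1) (hI : r ∈ oddIdeal 𝒜),
        e (Submodule.Quotient.mk ⟨r, hI⟩) = Submodule.Quotient.mk ⟨r, h1⟩) ∧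
      -- ... and is `R₀`-linear (multiplication by even elements)
      (∀ (b : R), b ∈ 𝒜 0 → ∀ (x : R) (hxI : x ∈ oddIdeal 𝒜) (hbxI : b * x ∈ oddIdeal 𝒜)
        (y : R) (hy : y ∈ 𝒜 1) (hby : b * y ∈ 𝒜 1),
        e (Submodule.Quotient.mk ⟨x, hxI⟩) = Submodule.Quotient.mk ⟨y, hy⟩ →
        e (Submodule.Quotient.mk ⟨b * x, hbxI⟩) = Submodule.Quotient.mk ⟨b * y, hby⟩) := by
  classical
  set sq' : Submodule k (oddIdeal 𝒜) := (oddIdealSq 𝒜).comap (oddIdeal 𝒜).subtype with hsq'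
  set cube' : Submodule k (𝒜 1) := (oddCube 𝒜).comap (𝒜 1).subtype with hcube'
  have hproj : ∀ x : R, x ∈ 𝒜 1 → (proj1 𝒜 x : R) = x := fun x hx => by
    rw [proj1_apply, DirectSum.decompose_of_mem_same 𝒜 hx]
  let F : oddIdeal 𝒜 →ₗ[k] ((𝒜 1) ⧸ cube') :=
    cube'.mkQ.comp ((proj1 𝒜).comp (oddIdeal 𝒜).subtype)
  have hFval : ∀ x : oddIdeal 𝒜, F x = Submodule.Quotient.mk (proj1 𝒜 (x : R)) := fun x => rfl
  have hF : sq' ≤ LinearMap.ker F := by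
    intro x hx
    have hc : (proj1 𝒜 (x : R) : R) ∈ oddCube 𝒜 := proj1_pairs 𝒜 (sq_le_pairs 𝒜 hsc hx)
    rw [LinearMap.mem_ker, hFval, Submodule.Quotient.mk_eq_zero]
    exact hc
  let Fbar := sq'.liftQ F hF
  let G : (𝒜 1) →ₗ[k] (oddIdeal 𝒜 ⧸ sq') :=
    sq'.mkQ.comp (Submodule.inclusion (odd_le_ideal 𝒜))
  have hGval : ∀ x : 𝒜 1, G x = Submodule.Quotient.mk (Submodule.inclusion (odd_le_ideal 𝒜) x) :=
    fun x => rfl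
  have hG : cube' ≤ LinearMap.ker G := by
    intro x hx
    rw [LinearMap.mem_ker, hGval, Submodule.Quotient.mk_eq_zero]
    exact cube_le_sq 𝒜 hx
  let Gbar := cube'.liftQ G hG
  have hFG : Fbar.comp Gbar = LinearMap.id := by
    apply Submodule.linearMap_qext
    ext x
    simp only [LinearMap.comp_apply, Submodule.mkQ_apply, LinearMap.id_apply, Fbar, Gbar,
      Submodule.liftQ_apply, hGval, hFval]
    congr 1
    exact Subtype.ext (hproj x x.2)
  have hGF : Gbar.comp Fbar = LinearMap.id := by
    apply Submodule.linearMap_qext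
    ext x
    simp only [LinearMap.comp_apply, Submodule.mkQ_apply, LinearMap.id_apply, Fbar, Gbar,
      Submodule.liftQ_apply, hGval, hFval]
    rw [Submodule.Quotient.eq, hsq', Submodule.mem_comap]
    simpa using proj1_sub_self_mem 𝒜 hsc x.2
  refine ⟨LinearEquiv.ofLinear Fbar Gbar hFG hGF, ?_, ?_⟩
  · intro r h1 hI
    show Fbar (Submodule.Quotient.mk ⟨r, hI⟩) = Submodule.Quotient.mk ⟨r, h1⟩
    rw [Submodule.liftQ_apply, hFval]
    congr 1
    exact Subtype.ext (hproj r h1)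
  · intro b hb x hxI hbxI y hy hby he
    show Fbar (Submodule.Quotient.mk ⟨b * x, hbxI⟩) = Submodule.Quotient.mk ⟨b * y, hby⟩
    replace he : Fbar (Submodule.Quotient.mk ⟨x, hxI⟩) = Submodule.Quotient.mk ⟨y, hy⟩ := he
    rw [Submodule.liftQ_apply, hFval, Submodule.Quotient.eq, hcube', Submodule.mem_comap] at he
    rw [Submodule.liftQ_apply, hFval, Submodule.Quotient.eq, hcube', Submodule.mem_comap]
    have he' : (proj1 𝒜 x : R) - y ∈ oddCube 𝒜 := by simpa using he
    have : b * ((proj1 𝒜 x : R) - y) ∈ oddCube 𝒜 := even_mul_cube 𝒜 hb he'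
    rw [mul_sub] at this
    simpa [proj1_even_mul 𝒜 hb x] using this
end

section
/- A supercommutative superalgebra R is Noetherian (its super-ideals satisfy the ascending chain condition) if and only if the even component R₀ is a Noetherian ring and the odd component R₁ is finitely generated as an R₀-module. -/
/-!
STATEMENT 5: A supercommutative superalgebra `R` is Noetherian (its super-ideals satisfy
the ACC) if and only if the even component `R₀` is a Noetherian ring and the odd
component `R₁` is a finitely generated `R₀`-module.
-/

variable {k : Type} [Field k]

/-- A super-ideal of a superalgebra: a homogeneous two-sided ideal, viewed as a
`k`-submodule. -/
def IsSuperIdeal {R : Type} [Ring R] [Algebra k R] (𝒜 : ZMod 2 → Submodule k R)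
    [GradedAlgebra 𝒜] (J : Submodule k R) : Prop :=
  (∀ r : R, ∀ x ∈ J, r * x ∈ J) ∧ (∀ r : R, ∀ x ∈ J, x * r ∈ J) ∧
  (∀ x ∈ J, ∀ i : ZMod 2, ((DirectSum.decompose 𝒜 x i : ↥(𝒜 i)) : R) ∈ J)

section Helpers

variable {R : Type} [Ring R] [Algebra k R]
variable (𝒜 : ZMod 2 → Submodule k R) [GradedAlgebra 𝒜]

open DirectSum

/-- The degree-`i` projection, as a `k`-linear endomorphism of `R`. -/
noncomputable def projL (i : ZMod 2) : R →ₗ[k] R :=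
  (𝒜 i).subtype ∘ₗ (DirectSum.component k (ZMod 2) (fun j => ↥(𝒜 j)) i) ∘ₗ
    (DirectSum.decomposeLinearEquiv 𝒜).toLinearMap

lemma projL_apply (x : R) (i : ZMod 2) :
    projL 𝒜 i x = ((DirectSum.decompose 𝒜 x i : ↥(𝒜 i)) : R) := rfl

lemma decompose_zero_add_one (x : R) :
    ((DirectSum.decompose 𝒜 x 0 : ↥(𝒜 0)) : R)
      + ((DirectSum.decompose 𝒜 x 1 : ↥(𝒜 1)) : R) = x := by
  classical
  conv_rhs => rw [← DirectSum.sum_support_decompose 𝒜 x]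
  rw [Finset.sum_subset (Finset.subset_univ ((decompose 𝒜 x).support))
    (fun i _ hi => by rw [DFinsupp.notMem_support_iff.mp hi, ZeroMemClass.coe_zero])]
  have huniv : (Finset.univ : Finset (ZMod 2)) = {0, 1} := by decide
  rw [huniv, Finset.sum_insert (by decide), Finset.sum_singleton]

lemma decompose_mul_right {j : ZMod 2} {y : R} (hy : y ∈ 𝒜 j) (x : R) (i : ZMod 2) :
    ((DirectSum.decompose 𝒜 (x * y) i : ↥(𝒜 i)) : R)
      = ((DirectSum.decompose 𝒜 x (i - j) : ↥(𝒜 (i - j))) : R) * y := by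
  have h0 : ((decompose 𝒜 x 0 : ↥(𝒜 0)) : R) * y ∈ 𝒜 (0 + j) :=
    SetLike.mul_mem_graded (SetLike.coe_mem _) hy
  have h1 : ((decompose 𝒜 x 1 : ↥(𝒜 1)) : R) * y ∈ 𝒜 (1 + j) :=
    SetLike.mul_mem_graded (SetLike.coe_mem _) hy
  rw [zero_add] at h0
  have hxy : x * y = ((decompose 𝒜 x 0 : ↥(𝒜 0)) : R) * y
      + ((decompose 𝒜 x 1 : ↥(𝒜 1)) : R) * y := by
    rw [← add_mul, decompose_zero_add_one]
  by_cases hij : i = j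
  · subst hij
    have hne : (1 : ZMod 2) + i ≠ i := by
      intro h; exact one_ne_zero (add_right_cancel (h.trans (zero_add i).symm))
    have hsub : i - i = (0 : ZMod 2) := sub_self i
    rw [hxy, DirectSum.decompose_add, DirectSum.add_apply, Submodule.coe_add,
      DirectSum.decompose_of_mem_same 𝒜 h0, DirectSum.decompose_of_mem_ne 𝒜 h1 hne,
      add_zero, hsub]
  · have key : ∀ a b : ZMod 2, a ≠ b → a = 1 + b := by decide
    have hji : i = 1 + j := key i j hij
    have hne0 : j ≠ i := fun h => hij h.symm
    rw [← hji] at h1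
    have hsub : i - j = (1 : ZMod 2) := by rw [hji]; exact add_sub_cancel_right 1 j
    rw [hxy, DirectSum.decompose_add, DirectSum.add_apply, Submodule.coe_add,
      DirectSum.decompose_of_mem_ne 𝒜 h0 hne0, DirectSum.decompose_of_mem_same 𝒜 h1,
      zero_add, hsub]

variable (hsc : ∀ (i j : ZMod 2) (a b : R), a ∈ 𝒜 i → b ∈ 𝒜 j →
      b * a = ((-1 : ℤ) ^ (i.val * j.val)) • (a * b))

include hsc in
/-- Even elements are central in a supercommutative superalgebra. -/
lemma even_central {b : R} (hb : b ∈ 𝒜 0) (r : R) : r * b = b * r := by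
  have h : ∀ (j : ZMod 2) (a : R), a ∈ 𝒜 j → b * a = a * b := by
    intro j a ha
    have := hsc j 0 a b ha hb
    simpa using this
  conv_lhs => rw [← decompose_zero_add_one 𝒜 r]
  rw [add_mul, ← h 0 _ (SetLike.coe_mem (decompose 𝒜 r 0)),
    ← h 1 _ (SetLike.coe_mem (decompose 𝒜 r 1)), ← mul_add, decompose_zero_add_one]

/-- Membership in a submodule is preserved along a linear map sending generators in. -/
lemma span_map_mem {f : R →ₗ[k] R} {S : Set R} {T : Submodule k R}
    (h : ∀ x ∈ S, f x ∈ T) {x : R} (hx : x ∈ Submodule.span k S) : f x ∈ T :=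
  (Submodule.span_le (p := T.comap f)).mpr h hx

/-- The super-ideal generated by an ideal `I` of the even part. -/
noncomputable def evenExt (I : Ideal ↥(𝒜 0)) : Submodule k R :=
  Submodule.span k {x | ∃ r : R, ∃ a : ↥(𝒜 0), a ∈ I ∧ x = r * ↑a}

include hsc in
lemma evenExt_superIdeal (I : Ideal ↥(𝒜 0)) : IsSuperIdeal 𝒜 (evenExt 𝒜 I) := by
  refine ⟨?_, ?_, ?_⟩
  · intro r x hx
    refine span_map_mem (f := LinearMap.mulLeft k r) (fun z hz => ?_) hx
    obtain ⟨r', a, ha, rfl⟩ := hz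
    exact Submodule.subset_span ⟨r * r', a, ha, (mul_assoc r r' _).symm⟩
  · intro r x hx
    refine span_map_mem (f := LinearMap.mulRight k r) (fun z hz => ?_) hx
    obtain ⟨r', a, ha, rfl⟩ := hz
    rw [LinearMap.mulRight_apply, mul_assoc, ← even_central 𝒜 hsc (SetLike.coe_mem a) r,
      ← mul_assoc]
    exact Submodule.subset_span ⟨r' * r, a, ha, rfl⟩
  · intro x hx i
    rw [← projL_apply]
    refine span_map_mem (fun z hz => ?_) hx
    obtain ⟨r, a, ha, rfl⟩ := hz
    rw [projL_apply, decompose_mul_right 𝒜 (SetLike.coe_mem a), sub_zero]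
    exact Submodule.subset_span ⟨_, a, ha, rfl⟩

lemma evenExt_recover (I : Ideal ↥(𝒜 0)) (a : ↥(𝒜 0)) (ha : (↑a : R) ∈ evenExt 𝒜 I) :
    a ∈ I := by
  -- the degree-0 part of anything in `evenExt I` lies in the span of the image of `I`
  set N : Submodule k R := Submodule.span k (Subtype.val '' (I : Set ↥(𝒜 0))) with hN
  have key : ((decompose 𝒜 (↑a : R) 0 : ↥(𝒜 0)) : R) ∈ N := by
    rw [← projL_apply]
    refine span_map_mem (fun z hz => ?_) ha
    obtain ⟨r, b, hb, rfl⟩ := hz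
    rw [projL_apply, decompose_mul_right 𝒜 (SetLike.coe_mem b), sub_zero]
    have hmem : (⟨_, SetLike.coe_mem (decompose 𝒜 r 0)⟩ * b : ↥(𝒜 0)) ∈ I := by
      rw [← smul_eq_mul]
      exact I.smul_mem _ hb
    exact Submodule.subset_span ⟨_, hmem, rfl⟩
  rw [DirectSum.decompose_of_mem_same 𝒜 (SetLike.coe_mem a)] at key
  -- elements of `N` come from `I`
  have himg : ∀ x ∈ N, ∃ b ∈ I, x = (↑b : R) := by
    intro x hx
    refine Submodule.span_induction ?_ ⟨0, I.zero_mem, rfl⟩ ?_ ?_ hx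
    · rintro z ⟨b, hb, rfl⟩; exact ⟨b, hb, rfl⟩
    · rintro y z - - ⟨b, hb, rfl⟩ ⟨c, hc, rfl⟩; exact ⟨b + c, I.add_mem hb hc, rfl⟩
    · rintro c y - ⟨b, hb, rfl⟩
      refine ⟨(⟨c • (1 : R), (𝒜 0).smul_mem c (SetLike.one_mem_graded 𝒜)⟩ : ↥(𝒜 0)) * b, ?_, ?_⟩
      · rw [← smul_eq_mul]; exact I.smul_mem _ hb
      · show c • (↑b : R) = ((_ * b : ↥(𝒜 0)) : R)
        show c • (↑b : R) = (c • (1 : R)) * ↑b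
        rw [smul_mul_assoc, one_mul]
  obtain ⟨b, hb, hab⟩ := himg _ key
  have : a = b := Subtype.ext hab
  exact this ▸ hb

/-- The super-ideal generated by a finite set of odd elements. -/
noncomputable def oddExt (_𝒜 : ZMod 2 → Submodule k R) (s : Finset R) : Submodule k R :=
  Submodule.span k {x | ∃ r : R, ∃ y ∈ s, x = r * y}

include hsc in
lemma oddExt_superIdeal {s : Finset R} (hs : (↑s : Set R) ⊆ (𝒜 1 : Set R)) :
    IsSuperIdeal 𝒜 (oddExt 𝒜 s) := by
  refine ⟨?_, ?_, ?_⟩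
  · intro r x hx
    refine span_map_mem (f := LinearMap.mulLeft k r) (fun z hz => ?_) hx
    obtain ⟨r', y, hy, rfl⟩ := hz
    exact Submodule.subset_span ⟨r * r', y, hy, (mul_assoc r r' y).symm⟩
  · intro r x hx
    refine span_map_mem (f := LinearMap.mulRight k r) (fun z hz => ?_) hx
    obtain ⟨r', y, hy, rfl⟩ := hz
    have hy1 : y ∈ 𝒜 1 := hs hy
    have e0 := hsc 0 1 (↑(decompose 𝒜 r 0) : R) y (SetLike.coe_mem _) hy1
    have e1 := hsc 1 1 (↑(decompose 𝒜 r 1) : R) y (SetLike.coe_mem _) hy1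
    rw [LinearMap.mulRight_apply]
    have expand : r' * y * r
        = r' * (y * ↑(decompose 𝒜 r 0)) + r' * (y * ↑(decompose 𝒜 r 1)) := by
      conv_lhs => rw [← decompose_zero_add_one 𝒜 r]
      rw [mul_assoc, mul_add, mul_add]
    rw [expand, e0, e1]
    refine Submodule.add_mem _ ?_ ?_
    · rw [mul_smul_comm]
      apply zsmul_mem
      exact Submodule.subset_span ⟨r' * ↑(decompose 𝒜 r 0), y, hy, (mul_assoc _ _ _).symm⟩
    · rw [mul_smul_comm]
      apply zsmul_mem
      exact Submodule.subset_span ⟨r' * ↑(decompose 𝒜 r 1), y, hy, (mul_assoc _ _ _).symm⟩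
  · intro x hx i
    rw [← projL_apply]
    refine span_map_mem (fun z hz => ?_) hx
    obtain ⟨r, y, hy, rfl⟩ := hz
    rw [projL_apply, decompose_mul_right 𝒜 (hs hy)]
    exact Submodule.subset_span ⟨_, y, hy, rfl⟩

lemma oddExt_odd_part {s : Finset R} (hs : (↑s : Set R) ⊆ (𝒜 1 : Set R))
    {r : R} (hr1 : r ∈ 𝒜 1) (hr : r ∈ oddExt 𝒜 s) :
    r ∈ Submodule.span k {x | ∃ b ∈ 𝒜 0, ∃ y ∈ s, x = b * y} := by
  have key : ((decompose 𝒜 r 1 : ↥(𝒜 1)) : R)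
      ∈ Submodule.span k {x | ∃ b ∈ 𝒜 0, ∃ y ∈ s, x = b * y} := by
    rw [← projL_apply]
    refine span_map_mem (fun z hz => ?_) hr
    obtain ⟨r', y, hy, rfl⟩ := hz
    rw [projL_apply, decompose_mul_right 𝒜 (hs hy), sub_self]
    exact Submodule.subset_span ⟨_, SetLike.coe_mem (decompose 𝒜 r' 0), y, hy, rfl⟩
  rwa [DirectSum.decompose_of_mem_same 𝒜 hr1] at key

end Helpers

theorem noetherian_iff_even_noetherian_and_odd_fg
    (h2 : (2 : k) ≠ 0)
    (R : Type) [Ring R] [Algebra k R]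
    (𝒜 : ZMod 2 → Submodule k R) [GradedAlgebra 𝒜]
    (hsc : ∀ (i j : ZMod 2) (a b : R), a ∈ 𝒜 i → b ∈ 𝒜 j →
      b * a = ((-1 : ℤ) ^ (i.val * j.val)) • (a * b)) :
    -- super-ideals of `R` satisfy the ACC
    (∀ c : ℕ → Submodule k R, (∀ n, IsSuperIdeal 𝒜 (c n)) → Monotone c →
      ∃ n, ∀ m, n ≤ m → c m = c n)
      ↔
    -- iff `R₀` is Noetherian and `R₁` is a finitely generated `R₀`-module
    (IsNoetherianRing ↥(𝒜 0) ∧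
      ∃ s : Finset R, (↑s : Set R) ⊆ (𝒜 1 : Set R) ∧
        ∀ r ∈ 𝒜 1, r ∈ Submodule.span k {x | ∃ b ∈ 𝒜 0, ∃ y ∈ s, x = b * y}) := by
  classical
  constructor
  · intro acc
    constructor
    · -- `R₀` is Noetherian
      rw [isNoetherianRing_iff, ← monotone_stabilizes_iff_noetherian]
      intro f
      obtain ⟨n, hn⟩ := acc (fun n => evenExt 𝒜 (f n))
        (fun n => evenExt_superIdeal 𝒜 hsc (f n))
        (fun i j hij => Submodule.span_mono (fun x => by
          rintro ⟨r, a, ha, rfl⟩; exact ⟨r, a, f.mono hij ha, rfl⟩))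
      refine ⟨n, fun m hm => le_antisymm (f.mono hm) ?_⟩
      intro a ha
      have : (↑a : R) ∈ evenExt 𝒜 (f m) :=
        Submodule.subset_span ⟨1, a, ha, (one_mul _).symm⟩
      rw [hn m hm] at this
      exact evenExt_recover 𝒜 (f n) a this
    · -- `R₁` is finitely generated over `R₀`
      -- the poset of super-ideals of the form `oddExt s`
      let P := {J : Submodule k R // ∃ s : Finset R, (↑s : Set R) ⊆ (𝒜 1 : Set R) ∧
        J = oddExt 𝒜 s}
      have hwf : WellFounded ((· > ·) : P → P → Prop) := by
        refine (wellFoundedGT_iff_monotone_chain_condition (α := P)).mpr ?_ |>.wf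
        intro a
        obtain ⟨n, hn⟩ := acc (fun n => ((a n : P) : Submodule k R))
          (fun n => by
            show IsSuperIdeal 𝒜 ((a n : P) : Submodule k R)
            obtain ⟨s, hs, hJ⟩ := (a n).2
            rw [hJ]; exact oddExt_superIdeal 𝒜 hsc hs)
          (fun i j hij => a.mono hij)
        exact ⟨n, fun m hm => Subtype.ext (hn m hm).symm⟩
      obtain ⟨M, -, hmax⟩ := hwf.has_min Set.univ
        ⟨⟨oddExt 𝒜 ∅, ∅, by simp, rfl⟩, Set.mem_univ _⟩
      obtain ⟨s₀, hs₀, hM⟩ := M.2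
      refine ⟨s₀, hs₀, fun r hr => ?_⟩
      have hrmem : r ∈ oddExt 𝒜 s₀ := by
        by_contra hnot
        have hsub : (↑(insert r s₀) : Set R) ⊆ (𝒜 1 : Set R) := by
          rw [Finset.coe_insert]
          exact Set.insert_subset hr hs₀
        have hle : oddExt 𝒜 s₀ ≤ oddExt 𝒜 (insert r s₀) :=
          Submodule.span_mono (by rintro x ⟨r', y, hy, rfl⟩
                                  exact ⟨r', y, Finset.mem_insert_of_mem hy, rfl⟩)
        have hrin : r ∈ oddExt 𝒜 (insert r s₀) :=
          Submodule.subset_span ⟨1, r, Finset.mem_insert_self r s₀, (one_mul r).symm⟩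
        have hlt : (M : Submodule k R) < oddExt 𝒜 (insert r s₀) := by
          rw [hM]
          exact lt_of_le_of_ne hle (fun h => hnot (h ▸ hrin))
        exact hmax ⟨oddExt 𝒜 (insert r s₀), insert r s₀, hsub, rfl⟩ (Set.mem_univ _)
          (Subtype.mk_lt_mk.mpr hlt)
      exact oddExt_odd_part 𝒜 hs₀ hr hrmem
  · rintro ⟨hnoeth, s, hs, hspan⟩
    intro c hc hmono
    -- work over the even subalgebra
    set S : Subalgebra k R := SetLike.GradeZero.subalgebra 𝒜 with hS
    haveI : IsNoetherianRing ↥S := by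
      refine isNoetherianRing_of_ringEquiv ↥(𝒜 0) ?_
      exact { toFun := fun a => ⟨↑a, a.2⟩
              invFun := fun a => ⟨↑a, a.2⟩
              left_inv := fun a => rfl
              right_inv := fun a => rfl
              map_mul' := fun a b => rfl
              map_add' := fun a b => rfl }
    -- `R` is a finite `S`-module
    have hsmul : ∀ (a : ↥S) (x : R), a • x = (↑a : R) * x := fun a x => rfl
    have htop : Submodule.span ↥S (insert 1 (↑s : Set R)) = (⊤ : Submodule ↥S R) := by
      rw [eq_top_iff]
      intro x _
      set T := Submodule.span ↥S (insert 1 (↑s : Set R)) with hT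
      -- T is closed under k-scalar multiplication
      have hksmul : ∀ (a : k) (y : R), y ∈ T → a • y ∈ T := by
        intro a y hy
        have : a • y = (⟨algebraMap k R a, S.algebraMap_mem a⟩ : ↥S) • y := by
          rw [hsmul, Algebra.smul_def]
        rw [this]
        exact T.smul_mem _ hy
      have hT' : ∀ y : R, y ∈ Submodule.span k {x | ∃ b ∈ 𝒜 0, ∃ y ∈ s, x = b * y} →
          y ∈ T := by
        intro y hy
        refine Submodule.span_induction ?_ T.zero_mem
          (fun _ _ _ _ h1 h2 => T.add_mem h1 h2) (fun a u _ hu => hksmul a u hu) hy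
        rintro z ⟨b, hb, w, hw, rfl⟩
        have : b * w = (⟨b, hb⟩ : ↥S) • w := rfl
        rw [this]
        exact T.smul_mem _ (Submodule.subset_span (Set.mem_insert_of_mem _ hw))
      have hx : x = ((DirectSum.decompose 𝒜 x 0 : ↥(𝒜 0)) : R)
          + ((DirectSum.decompose 𝒜 x 1 : ↥(𝒜 1)) : R) := (decompose_zero_add_one 𝒜 x).symm
      rw [hx]
      refine T.add_mem ?_ ?_
      · have : ((DirectSum.decompose 𝒜 x 0 : ↥(𝒜 0)) : R)
            = (⟨_, SetLike.coe_mem (DirectSum.decompose 𝒜 x 0)⟩ : ↥S) • (1 : R) := by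
          rw [hsmul, mul_one]
        rw [this]
        exact T.smul_mem _ (Submodule.subset_span (Set.mem_insert _ _))
      · exact hT' _ (hspan _ (SetLike.coe_mem (DirectSum.decompose 𝒜 x 1)))
    haveI : Module.Finite ↥S R := by
      refine ⟨⟨insert 1 s, ?_⟩⟩
      rw [Finset.coe_insert]
      exact htop
    haveI : IsNoetherian ↥S R := isNoetherian_of_isNoetherianRing_of_finite ↥S R
    -- transfer the chain
    let c' : ℕ → Submodule ↥S R := fun n =>
      { carrier := ↑(c n)
        add_mem' := fun h1 h2 => (c n).add_mem h1 h2
        zero_mem' := (c n).zero_mem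
        smul_mem' := fun a x hx => (hc n).1 ↑a x hx }
    obtain ⟨n, hn⟩ := monotone_stabilizes_iff_noetherian.mpr inferInstance
      ⟨c', fun i j hij x hx => hmono hij hx⟩
    refine ⟨n, fun m hm => ?_⟩
    have := hn m hm
    ext x
    constructor
    · intro hx
      have heq : c' n = c' m := this
      have hx' : x ∈ c' n := heq.symm ▸ (show x ∈ c' m from hx)
      exact hx'
    · intro hx
      exact hmono hm hx
end
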